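/- arXiv:2305.02442 — 4 statements merged into one kernel-verified Lean document; each statement's English description precedes it below -/
import Mathlib

section
/- For a Boolean network f and a configuration x: if x does not belong to any minimal trap space of f, then there exists a configuration y ∈ c(TS_f(x)) such that c(TS_f(y)) ⊊ c(TS_f(x)). -/
/-- The set of vertices of a subcube `h : Fin n → Option Bool`. -/
def vertices {n : ℕ} (h : Fin n → Option Bool) : Set (Fin n → Bool) :=
  {x | ∀ (i : Fin n) (b : Bool), h i = some b → x i = b}

/-- A subcube `h` is a trap space of the Boolean network `f` if it is closed by `f`. -/
def IsTrapSpace {n : ℕ} (f : (Fin n → Bool) → (Fin n → Bool))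
    (h : Fin n → Option Bool) : Prop :=
  ∀ x ∈ vertices h, f x ∈ vertices h

/-- A trap space is minimal if no trap space has a strictly smaller vertex set. -/
def IsMinimalTrapSpace {n : ℕ} (f : (Fin n → Bool) → (Fin n → Bool))
    (h : Fin n → Option Bool) : Prop :=
  IsTrapSpace f h ∧ ∀ h', IsTrapSpace f h' → ¬ (vertices h' ⊂ vertices h)

/-- `h` is the smallest trap space of `f` containing the configuration `x` (i.e. `TS_f(x)`). -/
def IsSmallestTrapSpace {n : ℕ} (f : (Fin n → Bool) → (Fin n → Bool))
    (x : Fin n → Bool) (h : Fin n → Option Bool) : Prop :=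
  IsTrapSpace f h ∧ x ∈ vertices h ∧
    ∀ h', IsTrapSpace f h' → x ∈ vertices h' → vertices h ⊆ vertices h'

/-- A configuration `x` matches a marker `M`. -/
def confMatches {n : ℕ} (x : Fin n → Bool) (M : Fin n → Option Bool) : Prop :=
  ∀ (i : Fin n) (b : Bool), M i = some b → x i = b

/-- A subcube `h` matches a marker `M`. -/
def subcubeMatches {n : ℕ} (h M : Fin n → Option Bool) : Prop :=
  ∀ (i : Fin n) (b : Bool), M i = some b → h i = some b

/-- The perturbed Boolean network `f/P`. -/
def perturb {n : ℕ} (f : (Fin n → Bool) → (Fin n → Bool))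
    (P : Fin n → Option Bool) : (Fin n → Bool) → (Fin n → Bool) :=
  fun x i => (P i).getD (f x i)


theorem exists_smallestTS {n : ℕ} (f : (Fin n → Bool) → (Fin n → Bool)) (y : Fin n → Bool) :
    ∃ g, IsSmallestTrapSpace f y g := by
  classical
  set g : Fin n → Option Bool := fun i =>
    if ∃ hs, IsTrapSpace f hs ∧ y ∈ vertices hs ∧ (hs i).isSome then some (y i) else none with hg
  have hmem : ∀ z, z ∈ vertices g ↔
      ∀ hs, IsTrapSpace f hs → y ∈ vertices hs → z ∈ vertices hs := by
    intro z
    constructor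
    · intro hz hs hts hys i b hib
      have hbs : y i = b := hys i b hib
      have hgi : g i = some (y i) := by
        simp only [hg]
        rw [if_pos ⟨hs, hts, hys, by simp [hib]⟩]
      rw [hz i (y i) hgi, hbs]
    · intro hz i b hib
      simp only [hg] at hib
      split at hib
      · rename_i hex
        obtain ⟨hs, hts, hys, hsome⟩ := hex
        obtain ⟨c, hc⟩ := Option.isSome_iff_exists.mp hsome
        have h1 := hz hs hts hys i c hc
        have h2 := hys i c hc
        rw [h1, ← h2, Option.some.inj hib]
      · exact absurd hib (by simp)
  refine ⟨g, ?_, ?_, ?_⟩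
  · intro z hz
    rw [hmem] at hz ⊢
    intro hs hts hys
    exact hts z (hz hs hts hys)
  · rw [hmem]; intro hs hts hys; exact hys
  · intro h' hts' hy' z hz
    exact (hmem z).mp hz h' hts' hy'

/-- if `x` is in no minimal trap space, some `y ∈ c(TS_f(x))` has a
strictly smaller smallest trap space. -/
theorem not_in_minimal_exists_smaller {n : ℕ}
    (f : (Fin n → Bool) → (Fin n → Bool)) (x : Fin n → Bool)
    (tsx : Fin n → Option Bool)
    (hnot : ¬ ∃ h : Fin n → Option Bool, IsMinimalTrapSpace f h ∧ x ∈ vertices h)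
    (htsx : IsSmallestTrapSpace f x tsx) :
    ∃ y ∈ vertices tsx, ∃ tsy : Fin n → Option Bool,
      IsSmallestTrapSpace f y tsy ∧ vertices tsy ⊂ vertices tsx := by
  have hne : ¬ IsMinimalTrapSpace f tsx := fun hm => hnot ⟨tsx, hm, htsx.2.1⟩
  have hsmall : ∃ h', IsTrapSpace f h' ∧ vertices h' ⊂ vertices tsx := by
    by_contra hc
    push_neg at hc
    exact hne ⟨htsx.1, fun h' ht hs => hc h' ht hs⟩
  obtain ⟨h', hts', hss⟩ := hsmall
  set y : Fin n → Bool := fun i => (h' i).getD false with hy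
  have hyv : y ∈ vertices h' := by
    intro i b hib
    simp [hy, hib]
  obtain ⟨tsy, htsy⟩ := exists_smallestTS f y
  refine ⟨y, hss.1 hyv, tsy, htsy, ?_⟩
  exact lt_of_le_of_lt (htsy.2.2 h' hts' hyv) hss
end

section
/- Characterization of membership in a minimal trap space: for a Boolean network f and a configuration x, x belongs to some minimal trap space of f if and only if for every configuration y ∈ c(TS_f(x)) one has c(TS_f(y)) = c(TS_f(x)). -/
lemma vertices_nonempty {n : ℕ} (h : Fin n → Option Bool) : (vertices h).Nonempty := by
  refine ⟨fun i => (h i).getD false, ?_⟩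
  intro i b hb
  simp [hb]

lemma exists_smallest {n : ℕ} (f : (Fin n → Bool) → (Fin n → Bool)) (y : Fin n → Bool) :
    ∃ h, IsSmallestTrapSpace f y h := by
  classical
  have hne : (Finset.univ.filter
      (fun h : Fin n → Option Bool => IsTrapSpace f h ∧ y ∈ vertices h)).Nonempty := by
    refine ⟨fun _ => none, ?_⟩
    simp [IsTrapSpace, vertices]
  obtain ⟨h, hmem, hmin⟩ := Finset.exists_min_image _ (fun h => (vertices h).ncard) hne
  simp only [Finset.mem_filter] at hmem
  refine ⟨h, hmem.2.1, hmem.2.2, ?_⟩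
  intro h' hT' hy'
  set m : Fin n → Option Bool := fun i => (h i).or (h' i) with hm
  have hv : vertices m = vertices h ∩ vertices h' := by
    ext z
    constructor
    · intro hz
      constructor
      · intro i b hb
        exact hz i b (by simp [hm, hb])
      · intro i b hb
        cases hh : h i with
        | none => exact hz i b (by simp [hm, hh, hb])
        | some b1 =>
          have e1 : y i = b1 := hmem.2.2 i b1 hh
          have e2 : y i = b := hy' i b hb
          have : b1 = b := by rw [← e1, e2]
          subst this
          exact hz i b1 (by simp [hm, hh])
    · rintro ⟨z1, z2⟩ i b hb
      cases hh : h i with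
      | none =>
        apply z2 i b
        simpa [hm, hh] using hb
      | some b1 =>
        have : b1 = b := by simpa [hm, hh] using hb
        subst this
        exact z1 i b1 hh
  have hTm : IsTrapSpace f m := by
    intro z hz
    rw [hv] at hz ⊢
    exact ⟨hmem.2.1 z hz.1, hT' z hz.2⟩
  have hym : y ∈ vertices m := by
    rw [hv]; exact ⟨hmem.2.2, hy'⟩
  have hle : (vertices h).ncard ≤ (vertices m).ncard := by
    apply hmin
    simp only [Finset.mem_filter]
    exact ⟨Finset.mem_univ _, hTm, hym⟩
  have hsub : vertices m ⊆ vertices h := by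
    rw [hv]; exact Set.inter_subset_left
  have heq : vertices m = vertices h :=
    Set.eq_of_subset_of_ncard_le hsub hle (Set.toFinite _)
  rw [← heq, hv]
  exact Set.inter_subset_right

/-- characterization of membership in a minimal trap space. -/
theorem mem_minimal_trap_space_iff {n : ℕ}
    (f : (Fin n → Bool) → (Fin n → Bool)) (x : Fin n → Bool)
    (tsx : Fin n → Option Bool) (htsx : IsSmallestTrapSpace f x tsx) :
    (∃ h : Fin n → Option Bool, IsMinimalTrapSpace f h ∧ x ∈ vertices h) ↔
      (∀ y ∈ vertices tsx, ∀ tsy : Fin n → Option Bool,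
        IsSmallestTrapSpace f y tsy → vertices tsy = vertices tsx) := by
  constructor
  · rintro ⟨h, ⟨hT, hMin⟩, hx⟩
    have hsub : vertices tsx ⊆ vertices h := htsx.2.2 h hT hx
    have heq : vertices tsx = vertices h := by
      by_contra hne
      exact hMin tsx htsx.1 (hsub.ssubset_of_ne hne)
    intro y hy tsy htsy
    have h1 : vertices tsy ⊆ vertices tsx := htsy.2.2 tsx htsx.1 hy
    have h2 : vertices tsy = vertices h := by
      by_contra hne
      exact hMin tsy htsy.1 ((h1.trans heq.subset).ssubset_of_ne hne)
    rw [h2, heq]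
  · intro H
    refine ⟨tsx, ⟨htsx.1, ?_⟩, htsx.2.1⟩
    intro h' hT' hss
    obtain ⟨y, hy⟩ := vertices_nonempty h'
    obtain ⟨tsy, htsy⟩ := exists_smallest f y
    have := H y (hss.subset hy) tsy htsy
    have h1 : vertices tsy ⊆ vertices h' := htsy.2.2 h' hT' hy
    rw [this] at h1
    exact hss.not_subset h1
end

section
/- Soundness of the CEGAR refinement: for a Boolean network f and a marker M, if all minimal trap spaces of f match M, then for every configuration x that does not match M there exists a configuration y ∈ c(TS_f(x)) such that c(TS_f(y)) ⊊ c(TS_f(x)) and TS_f(y) matches M. -/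
lemma meet_spec {n : ℕ} (f : (Fin n → Bool) → (Fin n → Bool))
    (h g : Fin n → Option Bool) (y : Fin n → Bool)
    (hh : IsTrapSpace f h) (hg : IsTrapSpace f g)
    (hyh : y ∈ vertices h) (hyg : y ∈ vertices g) :
    ∃ m : Fin n → Option Bool, IsTrapSpace f m ∧
      vertices m = vertices h ∩ vertices g := by
  refine ⟨fun i => (h i).elim (g i) some, ?_, ?_⟩
  case refine_2 =>
    ext z
    constructor
    · intro hz
      constructor
      · intro i b hib
        exact hz i b (by simp [hib])
      · intro i b hib
        cases hhi : h i with
        | none => exact hz i b (by simp [hhi, hib])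
        | some b' =>
          have e1 : y i = b' := hyh i b' hhi
          have e2 : y i = b := hyg i b hib
          have : b' = b := by rw [← e1, e2]
          exact this ▸ hz i b' (by simp [hhi])
    · rintro ⟨hz1, hz2⟩ i b hib
      cases hhi : h i with
      | none => exact hz2 i b (by simpa [hhi] using hib)
      | some b' => exact hz1 i b (by rw [hhi]; simpa [hhi] using hib)
  case refine_1 =>
    intro z hz
    have hmem : z ∈ vertices h ∩ vertices g := by
      constructor
      · intro i b hib
        exact hz i b (by simp [hib])
      · intro i b hib
        cases hhi : h i with
        | none => exact hz i b (by simp [hhi, hib])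
        | some b' =>
          have e1 : y i = b' := hyh i b' hhi
          have e2 : y i = b := hyg i b hib
          have : b' = b := by rw [← e1, e2]
          exact this ▸ hz i b' (by simp [hhi])
    have hf : f z ∈ vertices h ∩ vertices g := ⟨hh z hmem.1, hg z hmem.2⟩
    intro i b hib
    cases hhi : h i with
    | none => exact hf.2 i b (by simpa [hhi] using hib)
    | some b' => exact hf.1 i b (by rw [hhi]; simpa [hhi] using hib)

/-- soundness of the CEGAR refinement. -/
theorem cegar_refinement_sound {n : ℕ}
    (f : (Fin n → Bool) → (Fin n → Bool)) (M : Fin n → Option Bool)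
    (hall : ∀ h : Fin n → Option Bool, IsMinimalTrapSpace f h → subcubeMatches h M)
    (x : Fin n → Bool) (hx : ¬ confMatches x M)
    (tsx : Fin n → Option Bool) (htsx : IsSmallestTrapSpace f x tsx) :
    ∃ y ∈ vertices tsx, ∃ tsy : Fin n → Option Bool,
      IsSmallestTrapSpace f y tsy ∧ vertices tsy ⊂ vertices tsx ∧
        subcubeMatches tsy M := by
  classical
  -- choose a trap space inside tsx with minimal vertex cardinality
  set T : Finset (Fin n → Option Bool) :=
    Finset.univ.filter (fun h => IsTrapSpace f h ∧ vertices h ⊆ vertices tsx) with hT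
  have htsxT : tsx ∈ T := by simp [hT, htsx.1]
  obtain ⟨h, hhT, hminc⟩ := T.exists_min_image (fun h => (vertices h).ncard) ⟨tsx, htsxT⟩
  have hh : IsTrapSpace f h ∧ vertices h ⊆ vertices tsx := by
    simpa [hT] using hhT
  have hminTrap : IsMinimalTrapSpace f h := by
    refine ⟨hh.1, fun g hg hss => ?_⟩
    have hgT : g ∈ T := by simp [hT, hg, hss.subset.trans hh.2]
    have h1 := hminc g hgT
    have h2 : (vertices g).ncard < (vertices h).ncard :=
      Set.ncard_lt_ncard hss (Set.toFinite _)
    omega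
  have hMatch : subcubeMatches h M := hall h hminTrap
  have hne : vertices h ≠ vertices tsx := by
    intro heq
    apply hx
    intro i b hib
    exact (heq ▸ htsx.2.1) i b (hMatch i b hib)
  have hss : vertices h ⊂ vertices tsx := ⟨hh.2, fun hle => hne (le_antisymm hh.2 hle)⟩
  -- pick a vertex of h
  set y : Fin n → Bool := fun i => (h i).getD true with hy
  have hyv : y ∈ vertices h := by
    intro i b hib
    simp [hy, hib]
  -- choose the smallest trap space containing y
  set T2 : Finset (Fin n → Option Bool) :=
    Finset.univ.filter (fun g => IsTrapSpace f g ∧ y ∈ vertices g) with hT2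
  have hhT2 : h ∈ T2 := by simp [hT2, hh.1, hyv]
  obtain ⟨tsy, htsyT2, hminc2⟩ :=
    T2.exists_min_image (fun g => (vertices g).ncard) ⟨h, hhT2⟩
  have htsy : IsTrapSpace f tsy ∧ y ∈ vertices tsy := by simpa [hT2] using htsyT2
  have hsmall : ∀ g, IsTrapSpace f g → y ∈ vertices g → vertices tsy ⊆ vertices g := by
    intro g hg hyg
    obtain ⟨m, hm, hmeq⟩ := meet_spec f tsy g y htsy.1 hg htsy.2 hyg
    have hym : y ∈ vertices m := hmeq ▸ ⟨htsy.2, hyg⟩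
    have hmT2 : m ∈ T2 := by simp [hT2, hm, hym]
    have h1 := hminc2 m hmT2
    have hsub : vertices m ⊆ vertices tsy := hmeq ▸ Set.inter_subset_left
    have : vertices m = vertices tsy :=
      Set.eq_of_subset_of_ncard_le hsub h1 (Set.toFinite _)
    rw [← this, hmeq]
    exact Set.inter_subset_right
  have htsyh : vertices tsy ⊆ vertices h := hsmall h hh.1 hyv
  have htsyeq : vertices tsy = vertices h := by
    by_contra hne'
    exact hminTrap.2 tsy htsy.1 ⟨htsyh, fun hle => hne' (le_antisymm htsyh hle)⟩
  refine ⟨y, hh.2 hyv, tsy, ⟨htsy.1, htsy.2, hsmall⟩, ?_, ?_⟩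
  · exact htsyeq ▸ hss
  · intro i b hib
    apply hall tsy
    · exact ⟨htsy.1, fun g hg hgs => hminTrap.2 g hg (htsyeq ▸ hgs)⟩
    · exact hib
end

section
/- Correctness of the saturation procedure for computing smallest trap spaces: for a Boolean network f of dimension n and a configuration x, define the sequence of subcubes h^0, h^1, ... by h^0 i = some (x i), and h^{t+1} i = none if there exist b with h^t i = some b and a vertex y ∈ c(h^t) with f_i(y) ≠ b, and h^{t+1} i = h^t i otherwise. Then h^n is the smallest trap space of f containing x: h^n is a trap space of f, x ∈ c(h^n), and c(h^n) ⊆ c(h') for every trap space h' of f with x ∈ c(h'). -/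
open Classical in
/-- The saturation sequence: `satSeq f x 0` is the subcube reduced to `x`, and at each
step a fixed coordinate `i` is freed whenever some vertex `y` of the current subcube
has `f_i(y)` different from the fixed value. -/
noncomputable def satSeq {n : ℕ} (f : (Fin n → Bool) → (Fin n → Bool))
    (x : Fin n → Bool) : ℕ → Fin n → Option Bool
  | 0 => fun i => some (x i)
  | t + 1 => fun i =>
      if ∃ b : Bool, satSeq f x t i = some b ∧ ∃ y ∈ vertices (satSeq f x t), f y i ≠ b
      then none
      else satSeq f x t i

section SatAux
variable {n : ℕ} (f : (Fin n → Bool) → (Fin n → Bool)) (x : Fin n → Bool)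

open Classical in
lemma satSeq_succ_def (t : ℕ) (i : Fin n) :
    satSeq f x (t+1) i =
      if ∃ b : Bool, satSeq f x t i = some b ∧ ∃ y ∈ vertices (satSeq f x t), f y i ≠ b
      then none else satSeq f x t i := by
  rw [satSeq]

lemma satSeq_succ_or (t : ℕ) (i : Fin n) :
    satSeq f x (t+1) i = satSeq f x t i ∨ satSeq f x (t+1) i = none := by
  rw [satSeq_succ_def]; split <;> simp

lemma satSeq_mono (t : ℕ) : vertices (satSeq f x t) ⊆ vertices (satSeq f x (t+1)) := by
  intro y hy i b hb
  rcases satSeq_succ_or f x t i with h | h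
  · exact hy i b (h ▸ hb)
  · simp [h] at hb

lemma x_mem (t : ℕ) : x ∈ vertices (satSeq f x t) := by
  induction t with
  | zero => intro i b hb; exact Option.some_inj.mp hb
  | succ t ih => exact satSeq_mono f x t ih

lemma satSeq_congr (a b : ℕ) (h : satSeq f x a = satSeq f x b) :
    satSeq f x (a+1) = satSeq f x (b+1) :=
  funext fun i => by rw [satSeq_succ_def, satSeq_succ_def, h]

lemma satSeq_stable (t k : ℕ) (h : satSeq f x (t+1) = satSeq f x t) :
    satSeq f x (t+k) = satSeq f x t := by
  induction k with
  | zero => rfl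
  | succ k ih =>
    calc satSeq f x (t+k+1) = satSeq f x (t+1) := satSeq_congr f x _ _ ih
    _ = satSeq f x t := h

lemma trap_of_stable (t : ℕ) (h : satSeq f x (t+1) = satSeq f x t) :
    IsTrapSpace f (satSeq f x t) := by
  intro y hy i b hb
  by_contra hne
  have hc : ∃ b : Bool, satSeq f x t i = some b ∧ ∃ z ∈ vertices (satSeq f x t), f z i ≠ b :=
    ⟨b, hb, y, hy, hne⟩
  have := satSeq_succ_def f x t i
  rw [if_pos hc, h] at this
  rw [hb] at this
  exact Option.some_ne_none _ this

lemma invariant (h' : Fin n → Option Bool) (htrap : IsTrapSpace f h')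
    (hx : x ∈ vertices h') (t : ℕ) :
    ∀ (i : Fin n) (b : Bool), h' i = some b → satSeq f x t i = some b := by
  induction t with
  | zero => intro i b hb; exact congrArg some (hx i b hb)
  | succ t ih =>
    intro i b hb
    have hsub : vertices (satSeq f x t) ⊆ vertices h' := by
      intro y hy j c hc; exact hy j c (ih j c hc)
    rw [satSeq_succ_def, if_neg, ih i b hb]
    rintro ⟨c, hc, y, hy, hne⟩
    have : c = b := Option.some_inj.mp (hc ▸ ih i b hb)
    exact hne (this ▸ (htrap y (hsub hy) i b hb))

lemma somes_ssub (t : ℕ) (h : satSeq f x (t+1) ≠ satSeq f x t) :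
    (Finset.univ.filter (fun i => (satSeq f x (t+1) i).isSome)) ⊂
      (Finset.univ.filter (fun i => (satSeq f x t i).isSome)) := by
  constructor
  · intro i hi
    simp only [Finset.mem_filter, Finset.mem_univ, true_and] at hi ⊢
    rcases satSeq_succ_or f x t i with he | he
    · rwa [he] at hi
    · rw [he] at hi; exact absurd hi (by simp)
  · intro hsub
    apply h
    funext i
    rcases satSeq_succ_or f x t i with he | he
    · exact he
    · by_cases hs : (satSeq f x t i).isSome
      · have := hsub (Finset.mem_filter.mpr ⟨Finset.mem_univ i, hs⟩)
        simp only [Finset.mem_filter, he] at this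
        simp at this
      · rw [he]; cases ho : satSeq f x t i with
        | none => rfl
        | some b => rw [ho] at hs; simp at hs

lemma stable_at_n : satSeq f x (n+1) = satSeq f x n := by
  have key : ∀ t : ℕ, satSeq f x (t+1) = satSeq f x t ∨
      (Finset.univ.filter (fun i => (satSeq f x t i).isSome)).card + t ≤ n := by
    intro t
    induction t with
    | zero =>
      right
      simpa using Finset.card_filter_le Finset.univ (fun i => (satSeq f x 0 i).isSome)
    | succ t ih =>
      by_cases h : satSeq f x (t+1) = satSeq f x t
      · left; exact satSeq_congr f x _ _ h
      · right
        rcases ih with h' | h'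
        · exact absurd h' h
        · have := Finset.card_lt_card (somes_ssub f x t h)
          omega
  rcases key n with h | h
  · exact h
  · have hall : ∀ i, satSeq f x n i = none := by
      intro i
      have hcard : (Finset.univ.filter (fun i => (satSeq f x n i).isSome)).card = 0 := by omega
      have := Finset.card_eq_zero.mp hcard
      by_contra hne
      have hs : (satSeq f x n i).isSome := Option.ne_none_iff_isSome.mp hne
      have : i ∈ (Finset.univ.filter (fun i => (satSeq f x n i).isSome)) :=
        Finset.mem_filter.mpr ⟨Finset.mem_univ i, hs⟩
      simp_all
    funext i
    rw [satSeq_succ_def, if_neg, hall i]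
    rintro ⟨b, hb, -⟩
    rw [hall i] at hb
    exact Option.some_ne_none _ hb.symm

end SatAux

/-- after `n` saturation steps one obtains the smallest trap space
of `f` containing `x`. -/
theorem satSeq_is_smallest_trap_space {n : ℕ}
    (f : (Fin n → Bool) → (Fin n → Bool)) (x : Fin n → Bool) :
    IsTrapSpace f (satSeq f x n) ∧ x ∈ vertices (satSeq f x n) ∧
      ∀ h' : Fin n → Option Bool, IsTrapSpace f h' → x ∈ vertices h' →
        vertices (satSeq f x n) ⊆ vertices h' := by
  refine ⟨trap_of_stable f x n (stable_at_n f x), x_mem f x n, ?_⟩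
  intro h' htrap hx y hy i b hb
  exact hy i b (invariant f x h' htrap hx n i b hb)
end
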